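/- arXiv:0906.2034 — 3 statements merged into one kernel-verified Lean document; each statement's English description precedes it below -/
import Mathlib

section
/- The singular value soft-thresholding operator S_λ is non-expansive in the Frobenius norm: for any two m×n matrices W₁, W₂ and any λ ≥ 0, ‖S_λ(W₁) − S_λ(W₂)‖_F² ≤ ‖W₁ − W₂‖_F². -/
open Matrix BigOperators Finset

noncomputable section

/-- Squared Frobenius norm of a real matrix. -/
def frobSq {m n : ℕ} (A : Matrix (Fin m) (Fin n) ℝ) : ℝ :=
  ∑ i, ∑ j, (A i j) ^ 2

/-- Frobenius norm. -/
def frobNorm {m n : ℕ} (A : Matrix (Fin m) (Fin n) ℝ) : ℝ :=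
  Real.sqrt (frobSq A)

/-- The singular values of `A`, as square roots of the eigenvalues of `Aᴴ * A`. -/
def singVals {m n : ℕ} (A : Matrix (Fin m) (Fin n) ℝ) : Fin n → ℝ :=
  fun i => Real.sqrt ((Matrix.isHermitian_conjTranspose_mul_self A).eigenvalues i)

/-- Nuclear norm: the sum of the singular values. -/
def nnorm {m n : ℕ} (A : Matrix (Fin m) (Fin n) ℝ) : ℝ :=
  ∑ i, singVals A i

/-- Spectral norm: the largest singular value. -/
def specNorm {m n : ℕ} (A : Matrix (Fin m) (Fin n) ℝ) : ℝ :=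
  ⨆ i, singVals A i

/-- Projection onto the observed entries `Ω`. -/
def pO {m n : ℕ} (Ω : Finset (Fin m × Fin n)) (Y : Matrix (Fin m) (Fin n) ℝ) :
    Matrix (Fin m) (Fin n) ℝ :=
  fun i j => if (i, j) ∈ Ω then Y i j else 0

/-- Complementary projection `P_Ω^⊥ = I - P_Ω`. -/
def pOc {m n : ℕ} (Ω : Finset (Fin m × Fin n)) (Y : Matrix (Fin m) (Fin n) ℝ) :
    Matrix (Fin m) (Fin n) ℝ :=
  Y - pO Ω Y

/-- The objective `f_λ(Z) = ½‖P_Ω(Z) - P_Ω(X)‖_F² + λ‖Z‖_*`. -/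
def fObj {m n : ℕ} (Ω : Finset (Fin m × Fin n)) (X : Matrix (Fin m) (Fin n) ℝ) (lam : ℝ)
    (Z : Matrix (Fin m) (Fin n) ℝ) : ℝ :=
  (1 / 2) * frobSq (pO Ω Z - pO Ω X) + lam * nnorm Z

/-- The surrogate `Q_λ(Z | Z̃) = ½‖P_Ω(X) + P_Ω^⊥(Z̃) - Z‖_F² + λ‖Z‖_*`. -/
def qObj {m n : ℕ} (Ω : Finset (Fin m × Fin n)) (X : Matrix (Fin m) (Fin n) ℝ) (lam : ℝ)
    (Z Zt : Matrix (Fin m) (Fin n) ℝ) : ℝ :=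
  (1 / 2) * frobSq (pO Ω X + pOc Ω Zt - Z) + lam * nnorm Z

/-- `IsSVD W U d V` : `W = U D Vᵀ` is a thin SVD of `W` with strictly positive
singular values `d` and orthonormal columns in `U` and `V`. -/
def IsSVD {m n r : ℕ} (W : Matrix (Fin m) (Fin n) ℝ) (U : Matrix (Fin m) (Fin r) ℝ)
    (d : Fin r → ℝ) (V : Matrix (Fin n) (Fin r) ℝ) : Prop :=
  Uᵀ * U = 1 ∧ Vᵀ * V = 1 ∧ (∀ i, 0 < d i) ∧ W = U * Matrix.diagonal d * Vᵀ

/-- Trace inner product `⟨A, B⟩ = tr(AᵀB)`. -/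
def minner {m n : ℕ} (A B : Matrix (Fin m) (Fin n) ℝ) : ℝ :=
  ∑ i, ∑ j, A i j * B i j

/-- `G` is a subgradient of the nuclear norm at `Z`. -/
def NucSubgrad {m n : ℕ} (Z G : Matrix (Fin m) (Fin n) ℝ) : Prop :=
  ∀ Y, nnorm Z + minner G (Y - Z) ≤ nnorm Y

end
lemma stn_col_sq {m r : ℕ} (U : Matrix (Fin m) (Fin r) ℝ) (h : Uᵀ * U = 1) (i : Fin r) :
    ∑ k, U k i * U k i = 1 := by
  have := congrFun (congrFun h i) i
  simpa [Matrix.mul_apply, Matrix.one_apply] using this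

lemma stn_col_orth {m r : ℕ} (U : Matrix (Fin m) (Fin r) ℝ) (h : Uᵀ * U = 1) (i j : Fin r) :
    ∑ k, U k i * U k j = if i = j then 1 else 0 := by
  have := congrFun (congrFun h i) j
  simpa [Matrix.mul_apply, Matrix.one_apply] using this

lemma stn_bessel {m r₁ r₂ : ℕ} (U₁ : Matrix (Fin m) (Fin r₁) ℝ) (U₂ : Matrix (Fin m) (Fin r₂) ℝ)
    (h₁ : U₁ᵀ * U₁ = 1) (h₂ : U₂ᵀ * U₂ = 1) (i : Fin r₁) :
    ∑ j, (∑ k, U₁ k i * U₂ k j) ^ 2 ≤ 1 := by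
  set a : Fin r₂ → ℝ := fun j => ∑ k, U₁ k i * U₂ k j with ha
  have key : ∑ k, (U₁ k i - ∑ j, a j * U₂ k j) ^ 2 = 1 - ∑ j, (a j) ^ 2 := by
    have e1 : ∀ k, (U₁ k i - ∑ j, a j * U₂ k j) ^ 2 =
        U₁ k i * U₁ k i - 2 * ∑ j, a j * (U₁ k i * U₂ k j)
          + ∑ j, ∑ j', (a j * a j') * (U₂ k j * U₂ k j') := by
      intro k
      have hsq : (∑ j, a j * U₂ k j) * (∑ j', a j' * U₂ k j')
          = ∑ j, ∑ j', (a j * a j') * (U₂ k j * U₂ k j') := by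
        rw [Finset.sum_mul_sum]
        exact Finset.sum_congr rfl fun j _ => Finset.sum_congr rfl fun j' _ => by ring
      have h2 : (∑ j, a j * (U₁ k i * U₂ k j)) = U₁ k i * ∑ j, a j * U₂ k j := by
        rw [Finset.mul_sum]; exact Finset.sum_congr rfl fun j _ => by ring
      rw [h2, ← hsq]; ring
    rw [Finset.sum_congr rfl fun k _ => e1 k]
    rw [Finset.sum_add_distrib, Finset.sum_sub_distrib, stn_col_sq U₁ h₁ i]
    have t2 : ∑ k, 2 * ∑ j, a j * (U₁ k i * U₂ k j) = 2 * ∑ j, (a j) ^ 2 := by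
      rw [← Finset.mul_sum, Finset.sum_comm]
      congr 1
      refine Finset.sum_congr rfl fun j _ => ?_
      rw [← Finset.mul_sum]
      simp [ha, sq]
    have t3 : ∑ k, ∑ j, ∑ j', (a j * a j') * (U₂ k j * U₂ k j') = ∑ j, (a j) ^ 2 := by
      rw [Finset.sum_comm]
      refine Finset.sum_congr rfl fun j _ => ?_
      rw [Finset.sum_comm]
      have hj : ∀ j', ∑ k, a j * a j' * (U₂ k j * U₂ k j')
          = a j * a j' * (if j = j' then 1 else 0) := fun j' => by
        rw [← Finset.mul_sum, stn_col_orth U₂ h₂ j j']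
      simp only [hj, mul_ite, mul_one, mul_zero]
      simp [sq]
    rw [t2, t3]; ring
  have h0 : 0 ≤ ∑ k, (U₁ k i - ∑ j, a j * U₂ k j) ^ 2 :=
    Finset.sum_nonneg fun k _ => sq_nonneg _
  linarith [key ▸ h0]

lemma stn_sum_swap4 {a b c d : Type*} [Fintype a] [Fintype b] [Fintype c] [Fintype d]
    (f : a → b → c → d → ℝ) :
    ∑ w, ∑ x, ∑ y, ∑ z, f w x y z = ∑ y, ∑ z, ∑ w, ∑ x, f w x y z := by
  have h1 : ∀ w, ∑ x, ∑ y, ∑ z, f w x y z = ∑ y, ∑ x, ∑ z, f w x y z :=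
    fun w => Finset.sum_comm
  simp_rw [h1]
  rw [Finset.sum_comm]
  refine Finset.sum_congr rfl fun y _ => ?_
  have h2 : ∀ w, ∑ x, ∑ z, f w x y z = ∑ z, ∑ x, f w x y z := fun w => Finset.sum_comm
  simp_rw [h2]
  exact Finset.sum_comm

lemma stn_frobSq_eq_minner {m n : ℕ} (A : Matrix (Fin m) (Fin n) ℝ) :
    frobSq A = minner A A := by
  simp [frobSq, minner, sq]

lemma stn_frobSq_sub {m n : ℕ} (A B : Matrix (Fin m) (Fin n) ℝ) :
    frobSq (A - B) = frobSq A - 2 * minner A B + frobSq B := by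
  simp only [frobSq, minner, Matrix.sub_apply]
  rw [Finset.mul_sum, ← Finset.sum_sub_distrib, ← Finset.sum_add_distrib]
  refine Finset.sum_congr rfl fun i _ => ?_
  rw [Finset.mul_sum, ← Finset.sum_sub_distrib, ← Finset.sum_add_distrib]
  exact Finset.sum_congr rfl fun j _ => by ring

lemma stn_minner_svd {m n r₁ r₂ : ℕ}
    (U₁ : Matrix (Fin m) (Fin r₁) ℝ) (d₁ : Fin r₁ → ℝ) (V₁ : Matrix (Fin n) (Fin r₁) ℝ)
    (U₂ : Matrix (Fin m) (Fin r₂) ℝ) (d₂ : Fin r₂ → ℝ) (V₂ : Matrix (Fin n) (Fin r₂) ℝ) :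
    minner (U₁ * Matrix.diagonal d₁ * V₁ᵀ) (U₂ * Matrix.diagonal d₂ * V₂ᵀ)
      = ∑ i, ∑ j, (d₁ i * d₂ j) * ((∑ k, U₁ k i * U₂ k j) * (∑ k, V₁ k i * V₂ k j)) := by
  simp only [minner, Matrix.mul_apply, Matrix.transpose_apply, Matrix.diagonal_apply,
    mul_ite, mul_zero, Finset.sum_ite_eq', Finset.mem_univ, if_true]
  calc ∑ x, ∑ x1, (∑ i, U₁ x i * d₁ i * V₁ x1 i) * ∑ j, U₂ x j * d₂ j * V₂ x1 j
      = ∑ x, ∑ x1, ∑ i, ∑ j, (U₁ x i * d₁ i * V₁ x1 i) * (U₂ x j * d₂ j * V₂ x1 j) := by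
        exact Finset.sum_congr rfl fun x _ => Finset.sum_congr rfl fun x1 _ =>
          Finset.sum_mul_sum _ _ _ _
    _ = ∑ i, ∑ j, ∑ x, ∑ x1, (U₁ x i * d₁ i * V₁ x1 i) * (U₂ x j * d₂ j * V₂ x1 j) :=
        stn_sum_swap4 _
    _ = ∑ i, ∑ j, d₁ i * d₂ j * ((∑ k, U₁ k i * U₂ k j) * ∑ k, V₁ k i * V₂ k j) := by
        refine Finset.sum_congr rfl fun i _ => Finset.sum_congr rfl fun j _ => ?_
        rw [Finset.sum_mul_sum, Finset.mul_sum]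
        refine Finset.sum_congr rfl fun x _ => ?_
        rw [Finset.mul_sum]
        exact Finset.sum_congr rfl fun x1 _ => by ring

lemma stn_minner_self_svd {m n r : ℕ}
    (U : Matrix (Fin m) (Fin r) ℝ) (d : Fin r → ℝ) (V : Matrix (Fin n) (Fin r) ℝ)
    (hU : Uᵀ * U = 1) (hV : Vᵀ * V = 1) :
    minner (U * Matrix.diagonal d * Vᵀ) (U * Matrix.diagonal d * Vᵀ) = ∑ i, d i ^ 2 := by
  rw [stn_minner_svd]
  simp only [stn_col_orth U hU, stn_col_orth V hV, ite_mul, mul_ite, one_mul, mul_one,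
    mul_zero, zero_mul]
  simp [sq]

lemma stn_scalar_key (dd₁ dd₂ ss₁ ss₂ a b : ℝ) (h1 : 0 ≤ ss₁) (h2 : 0 ≤ ss₂)
    (h3 : ss₁ ≤ dd₁) (h4 : ss₂ ≤ dd₂) (hlip : (ss₁ - ss₂) ^ 2 ≤ (dd₁ - dd₂) ^ 2) :
    2 * ((dd₁ * dd₂ - ss₁ * ss₂) * (a * b)) ≤
      (1 / 2) * ((dd₁ ^ 2 - ss₁ ^ 2) * a ^ 2) + (1 / 2) * ((dd₁ ^ 2 - ss₁ ^ 2) * b ^ 2)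
        + (1 / 2) * ((dd₂ ^ 2 - ss₂ ^ 2) * a ^ 2) + (1 / 2) * ((dd₂ ^ 2 - ss₂ ^ 2) * b ^ 2) := by
  have hc : 0 ≤ dd₁ * dd₂ - ss₁ * ss₂ := by nlinarith
  have he : 0 ≤ (dd₁ ^ 2 - ss₁ ^ 2) + (dd₂ ^ 2 - ss₂ ^ 2) - 2 * (dd₁ * dd₂ - ss₁ * ss₂) := by
    nlinarith
  nlinarith [mul_nonneg hc (sq_nonneg (a - b)), mul_nonneg he (sq_nonneg a),
    mul_nonneg he (sq_nonneg b)]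

lemma stn_bound_piece {r₁ r₂ : ℕ} (e : Fin r₁ → ℝ) (A : Fin r₁ → Fin r₂ → ℝ)
    (he : ∀ i, 0 ≤ e i) (hA : ∀ i, ∑ j, A i j ^ 2 ≤ 1) :
    ∑ i, ∑ j, (1 / 2 : ℝ) * (e i * A i j ^ 2) ≤ (1 / 2) * ∑ i, e i := by
  rw [Finset.mul_sum]
  refine Finset.sum_le_sum fun i _ => ?_
  have h1 : ∑ j, (1 / 2 : ℝ) * (e i * A i j ^ 2) = (1 / 2) * (e i * ∑ j, A i j ^ 2) := by
    rw [Finset.mul_sum, Finset.mul_sum]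
  rw [h1]
  have := mul_le_mul_of_nonneg_left (hA i) (he i)
  linarith

/-- singular value soft-thresholding is non-expansive in the
Frobenius norm. -/
theorem soft_threshold_nonexpansive {m n r₁ r₂ : ℕ}
    (W₁ W₂ : Matrix (Fin m) (Fin n) ℝ)
    (U₁ : Matrix (Fin m) (Fin r₁) ℝ) (d₁ : Fin r₁ → ℝ) (V₁ : Matrix (Fin n) (Fin r₁) ℝ)
    (U₂ : Matrix (Fin m) (Fin r₂) ℝ) (d₂ : Fin r₂ → ℝ) (V₂ : Matrix (Fin n) (Fin r₂) ℝ)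
    (lam : ℝ) (hlam : 0 ≤ lam)
    (h₁ : IsSVD W₁ U₁ d₁ V₁) (h₂ : IsSVD W₂ U₂ d₂ V₂) :
    frobSq (U₁ * Matrix.diagonal (fun i => max (d₁ i - lam) 0) * V₁ᵀ -
        U₂ * Matrix.diagonal (fun i => max (d₂ i - lam) 0) * V₂ᵀ) ≤
      frobSq (W₁ - W₂) := by
  obtain ⟨hU₁, hV₁, hd₁, hW₁⟩ := h₁
  obtain ⟨hU₂, hV₂, hd₂, hW₂⟩ := h₂
  -- scalar abbreviations
  set s₁ : Fin r₁ → ℝ := fun i => max (d₁ i - lam) 0 with hs₁def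
  set s₂ : Fin r₂ → ℝ := fun j => max (d₂ j - lam) 0 with hs₂def
  have hs₁0 : ∀ i, 0 ≤ s₁ i := fun i => le_max_right _ _
  have hs₂0 : ∀ j, 0 ≤ s₂ j := fun j => le_max_right _ _
  have hs₁d : ∀ i, s₁ i ≤ d₁ i := fun i => max_le (by linarith) (hd₁ i).le
  have hs₂d : ∀ j, s₂ j ≤ d₂ j := fun j => max_le (by linarith) (hd₂ j).le
  have he₁ : ∀ i, 0 ≤ d₁ i ^ 2 - s₁ i ^ 2 := fun i => by
    have := pow_le_pow_left₀ (hs₁0 i) (hs₁d i) 2; linarith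
  have he₂ : ∀ j, 0 ≤ d₂ j ^ 2 - s₂ j ^ 2 := fun j => by
    have := pow_le_pow_left₀ (hs₂0 j) (hs₂d j) 2; linarith
  have hlip : ∀ i j, (s₁ i - s₂ j) ^ 2 ≤ (d₁ i - d₂ j) ^ 2 := by
    intro i j
    have habs : |s₁ i - s₂ j| ≤ |d₁ i - d₂ j| := by
      have h := abs_max_sub_max_le_abs (d₁ i - lam) (d₂ j - lam) 0
      have heq : d₁ i - lam - (d₂ j - lam) = d₁ i - d₂ j := by ring
      rw [heq] at h
      exact h
    calc (s₁ i - s₂ j) ^ 2 = |s₁ i - s₂ j| ^ 2 := (sq_abs _).symm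
      _ ≤ |d₁ i - d₂ j| ^ 2 := pow_le_pow_left₀ (abs_nonneg _) habs 2
      _ = (d₁ i - d₂ j) ^ 2 := sq_abs _
  -- rewrite both sides using the SVD structure
  rw [hW₁, hW₂, stn_frobSq_sub, stn_frobSq_sub,
    stn_frobSq_eq_minner, stn_frobSq_eq_minner, stn_frobSq_eq_minner, stn_frobSq_eq_minner,
    stn_minner_self_svd U₁ _ V₁ hU₁ hV₁, stn_minner_self_svd U₂ _ V₂ hU₂ hV₂,
    stn_minner_self_svd U₁ _ V₁ hU₁ hV₁, stn_minner_self_svd U₂ _ V₂ hU₂ hV₂,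
    stn_minner_svd, stn_minner_svd]
  -- now a pure inequality about sums
  have hbesselU : ∀ i, ∑ j, (∑ k, U₁ k i * U₂ k j) ^ 2 ≤ 1 := stn_bessel U₁ U₂ hU₁ hU₂
  have hbesselV : ∀ i, ∑ j, (∑ k, V₁ k i * V₂ k j) ^ 2 ≤ 1 := stn_bessel V₁ V₂ hV₁ hV₂
  have hbesselU' : ∀ j, ∑ i, (∑ k, U₁ k i * U₂ k j) ^ 2 ≤ 1 := by
    intro j
    have h := stn_bessel U₂ U₁ hU₂ hU₁ j
    have : ∀ i : Fin r₁, (∑ k, U₂ k j * U₁ k i) = ∑ k, U₁ k i * U₂ k j := fun i =>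
      Finset.sum_congr rfl fun k _ => mul_comm _ _
    simpa [this] using h
  have hbesselV' : ∀ j, ∑ i, (∑ k, V₁ k i * V₂ k j) ^ 2 ≤ 1 := by
    intro j
    have h := stn_bessel V₂ V₁ hV₂ hV₁ j
    have : ∀ i : Fin r₁, (∑ k, V₂ k j * V₁ k i) = ∑ k, V₁ k i * V₂ k j := fun i =>
      Finset.sum_congr rfl fun k _ => mul_comm _ _
    simpa [this] using h
  set A : Fin r₁ → Fin r₂ → ℝ := fun i j => ∑ k, U₁ k i * U₂ k j with hA
  set B : Fin r₁ → Fin r₂ → ℝ := fun i j => ∑ k, V₁ k i * V₂ k j with hB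
  have main : 2 * ∑ i, ∑ j, ((d₁ i * d₂ j - s₁ i * s₂ j) * (A i j * B i j)) ≤
      (∑ i, (d₁ i ^ 2 - s₁ i ^ 2)) + ∑ j, (d₂ j ^ 2 - s₂ j ^ 2) := by
    have step1 : 2 * ∑ i, ∑ j, ((d₁ i * d₂ j - s₁ i * s₂ j) * (A i j * B i j))
        = ∑ i, ∑ j, 2 * ((d₁ i * d₂ j - s₁ i * s₂ j) * (A i j * B i j)) := by
      rw [Finset.mul_sum]
      exact Finset.sum_congr rfl fun i _ => by rw [Finset.mul_sum]
    rw [step1]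
    have step2 : ∑ i, ∑ j, 2 * ((d₁ i * d₂ j - s₁ i * s₂ j) * (A i j * B i j)) ≤
        ∑ i, ∑ j, ((1 / 2) * ((d₁ i ^ 2 - s₁ i ^ 2) * A i j ^ 2)
          + (1 / 2) * ((d₁ i ^ 2 - s₁ i ^ 2) * B i j ^ 2)
          + (1 / 2) * ((d₂ j ^ 2 - s₂ j ^ 2) * A i j ^ 2)
          + (1 / 2) * ((d₂ j ^ 2 - s₂ j ^ 2) * B i j ^ 2)) := by
      refine Finset.sum_le_sum fun i _ => Finset.sum_le_sum fun j _ => ?_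
      exact stn_scalar_key (d₁ i) (d₂ j) (s₁ i) (s₂ j) (A i j) (B i j)
        (hs₁0 i) (hs₂0 j) (hs₁d i) (hs₂d j) (hlip i j)
    refine step2.trans ?_
    simp only [Finset.sum_add_distrib]
    have T1 : ∑ i, ∑ j, (1 / 2 : ℝ) * ((d₁ i ^ 2 - s₁ i ^ 2) * A i j ^ 2)
        ≤ (1 / 2) * ∑ i, (d₁ i ^ 2 - s₁ i ^ 2) :=
      stn_bound_piece _ _ he₁ hbesselU
    have T2 : ∑ i, ∑ j, (1 / 2 : ℝ) * ((d₁ i ^ 2 - s₁ i ^ 2) * B i j ^ 2)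
        ≤ (1 / 2) * ∑ i, (d₁ i ^ 2 - s₁ i ^ 2) :=
      stn_bound_piece _ _ he₁ hbesselV
    have T3 : ∑ i, ∑ j, (1 / 2 : ℝ) * ((d₂ j ^ 2 - s₂ j ^ 2) * A i j ^ 2)
        ≤ (1 / 2) * ∑ j, (d₂ j ^ 2 - s₂ j ^ 2) := by
      rw [Finset.sum_comm]
      exact stn_bound_piece _ _ he₂ hbesselU'
    have T4 : ∑ i, ∑ j, (1 / 2 : ℝ) * ((d₂ j ^ 2 - s₂ j ^ 2) * B i j ^ 2)
        ≤ (1 / 2) * ∑ j, (d₂ j ^ 2 - s₂ j ^ 2) := by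
      rw [Finset.sum_comm]
      exact stn_bound_piece _ _ he₂ hbesselV'
    linarith
  have split : ∑ i, ∑ j, ((d₁ i * d₂ j - s₁ i * s₂ j) * (A i j * B i j))
      = (∑ i, ∑ j, (d₁ i * d₂ j) * (A i j * B i j))
        - ∑ i, ∑ j, (s₁ i * s₂ j) * (A i j * B i j) := by
    rw [← Finset.sum_sub_distrib]
    refine Finset.sum_congr rfl fun i _ => ?_
    rw [← Finset.sum_sub_distrib]
    exact Finset.sum_congr rfl fun j _ => by ring
  have split1 : ∑ i, (d₁ i ^ 2 - s₁ i ^ 2) = (∑ i, d₁ i ^ 2) - ∑ i, s₁ i ^ 2 :=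
    Finset.sum_sub_distrib _ _
  have split2 : ∑ j, (d₂ j ^ 2 - s₂ j ^ 2) = (∑ j, d₂ j ^ 2) - ∑ j, s₂ j ^ 2 :=
    Finset.sum_sub_distrib _ _
  rw [split, split1, split2] at main
  linarith
end

section
/- The Soft-Impute iterates satisfy the sandwich inequality: if Z^{k+1} = argmin_Z Q_λ(Z | Z^k), then f_λ(Z^{k+1}) ≤ Q_λ(Z^{k+1} | Z^k) ≤ f_λ(Z^k). In particular the sequence f_λ(Z^k) is monotonically non-increasing. -/
open Matrix BigOperators Finset

lemma fObj_le_qObj {m n : ℕ} (Ω : Finset (Fin m × Fin n))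
    (X : Matrix (Fin m) (Fin n) ℝ) (lam : ℝ)
    (Z' Zt : Matrix (Fin m) (Fin n) ℝ) :
    fObj Ω X lam Z' ≤ qObj Ω X lam Z' Zt := by
  unfold fObj qObj
  gcongr
  unfold frobSq
  apply Finset.sum_le_sum; intro i _
  apply Finset.sum_le_sum; intro j _
  simp only [pO, pOc, Matrix.sub_apply, Matrix.add_apply]
  by_cases h : (i, j) ∈ Ω <;> simp [h] <;> nlinarith [sq_nonneg (Zt i j - Z' i j), sq_nonneg (X i j - Z' i j)]

lemma qObj_self {m n : ℕ} (Ω : Finset (Fin m × Fin n))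
    (X : Matrix (Fin m) (Fin n) ℝ) (lam : ℝ)
    (Zt : Matrix (Fin m) (Fin n) ℝ) :
    qObj Ω X lam Zt Zt = fObj Ω X lam Zt := by
  unfold fObj qObj frobSq
  congr 2
  apply Finset.sum_congr rfl; intro i _
  apply Finset.sum_congr rfl; intro j _
  simp only [pO, pOc, Matrix.sub_apply, Matrix.add_apply]
  by_cases h : (i, j) ∈ Ω <;> simp [h] <;> ring

/-- sandwich inequality for the Soft-Impute iterates, and in
particular monotone non-increase of `f_λ(Z^k)`. -/
theorem soft_impute_sandwich {m n : ℕ} (Ω : Finset (Fin m × Fin n))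
    (X : Matrix (Fin m) (Fin n) ℝ) (lam : ℝ) (hlam : 0 ≤ lam)
    (Z : ℕ → Matrix (Fin m) (Fin n) ℝ) (h0 : Z 0 = 0)
    (hmin : ∀ k, ∀ Z' : Matrix (Fin m) (Fin n) ℝ,
      qObj Ω X lam (Z (k + 1)) (Z k) ≤ qObj Ω X lam Z' (Z k)) :
    ∀ k, fObj Ω X lam (Z (k + 1)) ≤ qObj Ω X lam (Z (k + 1)) (Z k) ∧
      qObj Ω X lam (Z (k + 1)) (Z k) ≤ fObj Ω X lam (Z k) ∧
      fObj Ω X lam (Z (k + 1)) ≤ fObj Ω X lam (Z k) := by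
  intro k
  have h1 := fObj_le_qObj Ω X lam (Z (k+1)) (Z k)
  have h2 : qObj Ω X lam (Z (k + 1)) (Z k) ≤ fObj Ω X lam (Z k) := by
    calc qObj Ω X lam (Z (k + 1)) (Z k) ≤ qObj Ω X lam (Z k) (Z k) := hmin k (Z k)
    _ = fObj Ω X lam (Z k) := qObj_self Ω X lam (Z k)
  exact ⟨h1, h2, h1.trans h2⟩
end

section
/- The minimizer of (1/2)‖Z − W‖_F² + λ·rank(Z) over all matrices Z is given by hard-thresholding the SVD of W: Z* = U D_q V', where W = U D V' is the SVD with singular values d_1 ≥ d_2 ≥ ... and D_q retains exactly those singular values d_i with d_i² > 2λ (setting the rest to zero). Equivalently, for each q, the best rank-≤q Frobenius approximation contributes error ∑_{i>q} d_i², and the optimal q minimizes (1/2)∑_{i>q} d_i² + λq. -/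
open Matrix BigOperators Finset

noncomputable section
open RealInnerProductSpace

lemma mul_cancel_left' {a b q : ℕ} {U : Matrix (Fin a) (Fin b) ℝ} (hU : Uᵀ * U = 1)
    (X : Matrix (Fin b) (Fin q) ℝ) : Uᵀ * (U * X) = X := by
  rw [← Matrix.mul_assoc, hU, Matrix.one_mul]

lemma frobSq_eq_trace {m n : ℕ} (A : Matrix (Fin m) (Fin n) ℝ) :
    frobSq A = Matrix.trace (Aᵀ * A) := by
  simp [frobSq, Matrix.trace, Matrix.diag, Matrix.mul_apply, sq]
  rw [Finset.sum_comm]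

lemma frobSq_nonneg' {m n : ℕ} (A : Matrix (Fin m) (Fin n) ℝ) : 0 ≤ frobSq A := by
  apply Finset.sum_nonneg; intro i _; apply Finset.sum_nonneg; intro j _; positivity

lemma frobSq_eq_zero' {m n : ℕ} {A : Matrix (Fin m) (Fin n) ℝ} (h : frobSq A = 0) : A = 0 := by
  ext i j
  have h1 : ∀ i ∈ Finset.univ, (0:ℝ) ≤ ∑ j, (A i j)^2 := fun i _ =>
    Finset.sum_nonneg fun j _ => sq_nonneg _
  have h2 := (Finset.sum_eq_zero_iff_of_nonneg h1).mp h i (Finset.mem_univ i)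
  have h3 := (Finset.sum_eq_zero_iff_of_nonneg (fun j _ => sq_nonneg (A i j))).mp h2 j
    (Finset.mem_univ j)
  simpa using pow_eq_zero_iff (n := 2) (by norm_num) |>.mp h3

lemma frobSq_sub_comm {m n : ℕ} (A B : Matrix (Fin m) (Fin n) ℝ) :
    frobSq (A - B) = frobSq (B - A) := by
  unfold frobSq
  refine Finset.sum_congr rfl fun i _ => Finset.sum_congr rfl fun j _ => ?_
  simp only [Matrix.sub_apply]
  ring

lemma frobSq_proj_mul {m n : ℕ} {P : Matrix (Fin m) (Fin m) ℝ}
    (hPt : Pᵀ = P) (hPP : P * P = P) (X : Matrix (Fin m) (Fin n) ℝ) :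
    frobSq (P * X) = Matrix.trace (Xᵀ * (P * X)) := by
  rw [frobSq_eq_trace, Matrix.transpose_mul, hPt, Matrix.mul_assoc,
    ← Matrix.mul_assoc P P X, hPP]

lemma frobSq_pythagoras {m n : ℕ} {P : Matrix (Fin m) (Fin m) ℝ}
    (hPt : Pᵀ = P) (hPP : P * P = P) (X : Matrix (Fin m) (Fin n) ℝ) :
    frobSq X = frobSq (P * X) + frobSq (X - P * X) := by
  have h1 : frobSq (P * X) = Matrix.trace (Xᵀ * (P * X)) := frobSq_proj_mul hPt hPP X
  have h2 : (X - P * X)ᵀ * (X - P * X) = Xᵀ * X - Xᵀ * (P * X) := by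
    have hPXt : (P * X)ᵀ = Xᵀ * P := by rw [Matrix.transpose_mul, hPt]
    rw [Matrix.transpose_sub, hPXt, Matrix.sub_mul, Matrix.mul_sub, Matrix.mul_sub]
    have h3 : Xᵀ * P * (P * X) = Xᵀ * (P * X) := by
      rw [Matrix.mul_assoc, ← Matrix.mul_assoc P P X, hPP]
    have h4 : Xᵀ * P * X = Xᵀ * (P * X) := by rw [Matrix.mul_assoc]
    rw [h3, h4]
    abel
  rw [frobSq_eq_trace (X - P * X), h2, Matrix.trace_sub, h1, frobSq_eq_trace X]
  ring

lemma frobSq_unitary {m n r : ℕ} {U : Matrix (Fin m) (Fin r) ℝ} {V : Matrix (Fin n) (Fin r) ℝ}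
    (hU : Uᵀ * U = 1) (hV : Vᵀ * V = 1) (A : Matrix (Fin r) (Fin r) ℝ) :
    frobSq (U * A * Vᵀ) = frobSq A := by
  rw [frobSq_eq_trace, frobSq_eq_trace]
  have ht : (U * A * Vᵀ)ᵀ * (U * A * Vᵀ) = V * (Aᵀ * (A * Vᵀ)) := by
    rw [Matrix.transpose_mul, Matrix.transpose_mul, Matrix.transpose_transpose]
    simp only [Matrix.mul_assoc]
    rw [mul_cancel_left' hU]
  rw [ht, Matrix.trace_mul_comm]
  simp only [Matrix.mul_assoc]
  rw [hV, Matrix.mul_one]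

lemma frobSq_diagonal {r : ℕ} (e : Fin r → ℝ) :
    frobSq (Matrix.diagonal e) = ∑ i, e i ^ 2 := by
  unfold frobSq
  refine Finset.sum_congr rfl fun i _ => ?_
  rw [Finset.sum_eq_single i]
  · simp
  · intro j _ hj
    simp [Matrix.diagonal_apply_ne' e hj]
  · simp

lemma trace_diag_mul_mul_diag {r : ℕ} (d : Fin r → ℝ) (M : Matrix (Fin r) (Fin r) ℝ) :
    Matrix.trace (Matrix.diagonal d * M * Matrix.diagonal d) = ∑ i, d i ^ 2 * M i i := by
  unfold Matrix.trace
  refine Finset.sum_congr rfl fun i _ => ?_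
  simp [Matrix.diag, Matrix.mul_diagonal, Matrix.diagonal_mul]
  ring

lemma rank_unitary_diag {m n r : ℕ} {U : Matrix (Fin m) (Fin r) ℝ}
    {V : Matrix (Fin n) (Fin r) ℝ} (hU : Uᵀ * U = 1) (hV : Vᵀ * V = 1) (c : Fin r → ℝ) :
    (U * Matrix.diagonal c * Vᵀ).rank = (Finset.univ.filter (fun i => c i ≠ 0)).card := by
  classical
  have hle : (U * Matrix.diagonal c * Vᵀ).rank ≤ (Matrix.diagonal c).rank :=
    le_trans (Matrix.rank_mul_le_left _ _) (Matrix.rank_mul_le_right _ _)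
  have heq : Matrix.diagonal c = Uᵀ * (U * Matrix.diagonal c * Vᵀ) * V := by
    calc Matrix.diagonal c = Uᵀ * (U * (Matrix.diagonal c * (Vᵀ * V))) := by
          rw [hV, Matrix.mul_one, mul_cancel_left' hU]
    _ = Uᵀ * (U * Matrix.diagonal c * Vᵀ) * V := by simp only [Matrix.mul_assoc]
  have hge : (Matrix.diagonal c).rank ≤ (U * Matrix.diagonal c * Vᵀ).rank := by
    conv_lhs => rw [heq]
    exact le_trans (Matrix.rank_mul_le_left _ _) (Matrix.rank_mul_le_right _ _)
  have h1 : (U * Matrix.diagonal c * Vᵀ).rank = (Matrix.diagonal c).rank :=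
    le_antisymm hle hge
  rw [h1, Matrix.rank_diagonal, Fintype.card_subtype]

lemma exists_proj {m n : ℕ} (Z : Matrix (Fin m) (Fin n) ℝ) :
    ∃ P : Matrix (Fin m) (Fin m) ℝ,
      Pᵀ = P ∧ P * P = P ∧ P * Z = Z ∧ P.trace = (Z.rank : ℝ) := by
  classical
  set K : Submodule ℝ (EuclideanSpace ℝ (Fin m)) :=
    LinearMap.range (Matrix.toEuclideanLin Z) with hK
  have hq : Z.rank = Module.finrank ℝ K := by
    rw [Matrix.rank_eq_finrank_range_toLin Z (PiLp.basisFun 2 ℝ (Fin m))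
      (PiLp.basisFun 2 ℝ (Fin n))]
    rfl
  set q := Module.finrank ℝ K with hqdef
  let b : OrthonormalBasis (Fin q) ℝ K := stdOrthonormalBasis ℝ K
  let A : Matrix (Fin m) (Fin q) ℝ := fun k i => (b i : EuclideanSpace ℝ (Fin m)) k
  have hAA : Aᵀ * A = 1 := by
    ext i j
    have := b.orthonormal
    rw [orthonormal_iff_ite] at this
    have h2 := this i j
    rw [Submodule.coe_inner, PiLp.inner_apply] at h2
    simp only [RCLike.inner_apply, conj_trivial] at h2
    simp only [Matrix.mul_apply, Matrix.transpose_apply, Matrix.one_apply]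
    rw [← h2]
    exact Finset.sum_congr rfl fun k _ => mul_comm _ _
  have hfix : ∀ x : K, (A * Aᵀ).mulVec (x : EuclideanSpace ℝ (Fin m))
      = (x : EuclideanSpace ℝ (Fin m)) := by
    intro x
    have hrepr := b.sum_repr' x
    funext k
    have hcoe : ((x : K) : EuclideanSpace ℝ (Fin m))
        = ∑ i, ⟪b i, x⟫ • ((b i : K) : EuclideanSpace ℝ (Fin m)) := by
      conv_lhs => rw [← hrepr]
      push_cast
      rfl
    have hrhs : (x : EuclideanSpace ℝ (Fin m)) k
        = ∑ i, ⟪b i, x⟫ * (b i : EuclideanSpace ℝ (Fin m)) k := by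
      conv_lhs => rw [hcoe]
      rw [WithLp.ofLp_sum]
      exact Finset.sum_apply k Finset.univ _
    have hinner : ∀ i, ⟪b i, x⟫ = ∑ l, A l i * (x : EuclideanSpace ℝ (Fin m)) l := by
      intro i
      rw [Submodule.coe_inner, PiLp.inner_apply]
      simp only [RCLike.inner_apply, conj_trivial]
      exact Finset.sum_congr rfl fun l _ => mul_comm _ _
    have hlhs : ((A * Aᵀ).mulVec (x : EuclideanSpace ℝ (Fin m))) k
        = ∑ i, (∑ l, A l i * (x : EuclideanSpace ℝ (Fin m)) l) * A k i := by
      simp only [Matrix.mulVec, dotProduct, Matrix.mul_apply, Matrix.transpose_apply]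
      simp_rw [Finset.sum_mul]
      rw [Finset.sum_comm]
      refine Finset.sum_congr rfl fun i _ => ?_
      exact Finset.sum_congr rfl fun l _ => by ring
    rw [hlhs, hrhs]
    exact Finset.sum_congr rfl fun i _ => by rw [hinner i]
  refine ⟨A * Aᵀ, by rw [Matrix.transpose_mul, Matrix.transpose_transpose], ?_, ?_, ?_⟩
  · calc A * Aᵀ * (A * Aᵀ) = A * (Aᵀ * A) * Aᵀ := by
          rw [Matrix.mul_assoc, Matrix.mul_assoc, Matrix.mul_assoc]
    _ = A * Aᵀ := by rw [hAA, Matrix.mul_one]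
  · ext k j
    have hmem : (WithLp.equiv 2 (Fin m → ℝ)).symm (fun l => Z l j) ∈ K := by
      refine ⟨(WithLp.equiv 2 (Fin n → ℝ)).symm (Pi.single j 1), ?_⟩
      rw [WithLp.equiv_symm_apply, Matrix.toEuclideanLin_apply_piLp_toLp, Matrix.mulVec_single]
      simp
      rfl
    have := congrFun (hfix ⟨_, hmem⟩) k
    simpa [Matrix.mul_apply, Matrix.mulVec, dotProduct] using this
  · have h1 : (A * Aᵀ).trace = (Aᵀ * A).trace := Matrix.trace_mul_comm A Aᵀ
    rw [h1, hAA, Matrix.trace_one, hq]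
    simp
end

set_option maxHeartbeats 1000000 in
/-- the unique minimizer of `½‖Z - W‖_F² + λ rank(Z)` is the
hard-thresholded SVD retaining exactly the singular values with `dᵢ² > 2λ`. -/
theorem hard_threshold_unique_minimizer {m n r : ℕ}
    (W : Matrix (Fin m) (Fin n) ℝ) (U : Matrix (Fin m) (Fin r) ℝ)
    (d : Fin r → ℝ) (V : Matrix (Fin n) (Fin r) ℝ)
    (lam : ℝ) (hlam : 0 < lam) (hSVD : IsSVD W U d V)
    (hsorted : ∀ i j : Fin r, i ≤ j → d j ≤ d i)
    (hdistinct : ∀ i j : Fin r, i ≠ j → d i ≠ d j)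
    (hgen : ∀ i : Fin r, (d i) ^ 2 ≠ 2 * lam) :
    ∀ Z : Matrix (Fin m) (Fin n) ℝ,
      Z ≠ U * Matrix.diagonal (fun i => if 2 * lam < (d i) ^ 2 then d i else 0) * Vᵀ →
      (1 / 2) * frobSq (U * Matrix.diagonal (fun i => if 2 * lam < (d i) ^ 2 then d i else 0)
            * Vᵀ - W) +
          lam * ((U * Matrix.diagonal (fun i => if 2 * lam < (d i) ^ 2 then d i else 0)
            * Vᵀ).rank : ℝ) <
        (1 / 2) * frobSq (Z - W) + lam * (Z.rank : ℝ) := by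
  classical
  obtain ⟨hU, hV, hd, hW⟩ := hSVD
  intro Z hZ
  by_contra hcon
  push_neg at hcon
  set c : Fin r → ℝ := fun i => if 2 * lam < (d i) ^ 2 then d i else 0 with hc
  set Zs : Matrix (Fin m) (Fin n) ℝ := U * Matrix.diagonal c * Vᵀ with hZs
  -- value at Zs
  have hZsW : frobSq (Zs - W) = ∑ i, (if 2 * lam < d i ^ 2 then (0:ℝ) else d i ^ 2) := by
    have h1 : Zs - W = U * Matrix.diagonal (fun i => c i - d i) * Vᵀ := by
      rw [hZs, hW, ← Matrix.sub_mul, ← Matrix.mul_sub, Matrix.diagonal_sub]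
    rw [h1, frobSq_unitary hU hV, frobSq_diagonal]
    refine Finset.sum_congr rfl fun i _ => ?_
    by_cases hcond : 2 * lam < d i ^ 2 <;> simp [hc, hcond, Pi.sub_apply] <;> ring
  have hZsrank : ((Zs.rank : ℝ)) = ∑ i, (if 2 * lam < d i ^ 2 then (1:ℝ) else 0) := by
    rw [hZs, rank_unitary_diag hU hV, Finset.card_filter]
    push_cast
    refine Finset.sum_congr rfl fun i _ => ?_
    by_cases hcond : 2 * lam < d i ^ 2
    · simp [hc, hcond, ne_of_gt (hd i)]
    · simp [hc, hcond]
  have hE : (1/2) * frobSq (Zs - W) + lam * ((Zs.rank : ℝ))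
      = ∑ i, (if 2 * lam < d i ^ 2 then lam else (1/2) * d i ^ 2) := by
    rw [hZsW, hZsrank, Finset.mul_sum, Finset.mul_sum, ← Finset.sum_add_distrib]
    refine Finset.sum_congr rfl fun i _ => ?_
    by_cases hcond : 2 * lam < d i ^ 2 <;> simp [hcond]
  -- projection
  obtain ⟨P, hPt, hPP, hPZ, hPtr⟩ := exists_proj Z
  set t : Fin r → ℝ := fun i => (Uᵀ * (P * U)) i i with htdef
  have hM : Uᵀ * (P * U) = (P * U)ᵀ * (P * U) := by
    rw [Matrix.transpose_mul, hPt]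
    calc Uᵀ * (P * U) = Uᵀ * ((P * P) * U) := by rw [hPP]
    _ = Uᵀ * P * (P * U) := by simp only [Matrix.mul_assoc]
  have ht_sq : ∀ i, t i = ∑ k, ((P * U) k i) ^ 2 := by
    intro i
    have h := congrFun (congrFun hM i) i
    simp only [Matrix.mul_apply, Matrix.transpose_apply] at h
    rw [htdef]
    simp only [Matrix.mul_apply, Matrix.transpose_apply]
    rw [h]
    exact Finset.sum_congr rfl fun k _ => (sq ((P*U) k i)).symm
  have h_oneMinus : (U - P * U)ᵀ * (U - P * U) = 1 - Uᵀ * (P * U) := by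
    have e1 : (P * U)ᵀ * U = Uᵀ * (P * U) := by
      rw [Matrix.transpose_mul, hPt, Matrix.mul_assoc]
    have e3 : (P * U)ᵀ * (P * U) = Uᵀ * (P * U) := hM.symm
    rw [Matrix.transpose_sub, Matrix.sub_mul, Matrix.mul_sub, Matrix.mul_sub, hU, e1, e3]
    abel
  have hone : ∀ i, 1 - t i = ∑ k, ((U - P * U) k i) ^ 2 := by
    intro i
    have h := congrFun (congrFun h_oneMinus i) i
    have hL : ((U - P * U)ᵀ * (U - P * U)) i i = ∑ k, ((U - P * U) k i) ^ 2 := by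
      simp only [Matrix.mul_apply, Matrix.transpose_apply]
      exact Finset.sum_congr rfl fun k _ => (sq _).symm
    have hR : ((1 - Uᵀ * (P * U)) : Matrix (Fin r) (Fin r) ℝ) i i = 1 - t i := by
      simp only [Matrix.sub_apply, Matrix.one_apply_eq]
      rfl
    rw [← hR, ← h]
    exact hL
  have ht0 : ∀ i, 0 ≤ t i := fun i => by
    rw [ht_sq i]; exact Finset.sum_nonneg fun k _ => sq_nonneg _
  have ht1 : ∀ i, t i ≤ 1 := fun i => by
    have := hone i
    have h2 : (0:ℝ) ≤ ∑ k, ((U - P * U) k i) ^ 2 := Finset.sum_nonneg fun k _ => sq_nonneg _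
    linarith
  -- ∑ t ≤ trace P
  have htsum : ∑ i, t i ≤ Matrix.trace P := by
    have hQt : (U * Uᵀ)ᵀ = U * Uᵀ := by
      rw [Matrix.transpose_mul, Matrix.transpose_transpose]
    have hQQ : (U * Uᵀ) * (U * Uᵀ) = U * Uᵀ := by
      simp only [Matrix.mul_assoc]
      rw [mul_cancel_left' hU]
    have hpyth := frobSq_pythagoras hQt hQQ P
    have h1 : frobSq P = Matrix.trace P := by
      rw [frobSq_eq_trace, hPt, hPP]
    have h2 : frobSq ((U * Uᵀ) * P) = ∑ i, t i := by
      rw [frobSq_proj_mul hQt hQQ P, hPt]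
      have e : P * (U * Uᵀ * P) = (P * U) * (Uᵀ * P) := by simp only [Matrix.mul_assoc]
      rw [e, Matrix.trace_mul_comm, Matrix.mul_assoc, ← Matrix.mul_assoc P P U, hPP]
      rfl
    have h3 : 0 ≤ frobSq (P - (U * Uᵀ) * P) := frobSq_nonneg' _
    linarith
  -- decomposition of frobSq (Z - W)
  have hPWZ : P * (W - Z) = P * W - Z := by rw [Matrix.mul_sub, hPZ]
  have hdecomp : frobSq (Z - W) = frobSq (Z - P * W) + frobSq (W - P * W) := by
    have hp := frobSq_pythagoras hPt hPP (W - Z)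
    rw [hPWZ] at hp
    have e : W - Z - (P * W - Z) = W - P * W := by abel
    rw [e] at hp
    rw [frobSq_sub_comm Z W, hp, frobSq_sub_comm (P * W) Z]
  have hfrobW : frobSq W = ∑ i, d i ^ 2 := by
    rw [hW, frobSq_unitary hU hV, frobSq_diagonal]
  have hfrobPW : frobSq (P * W) = ∑ i, d i ^ 2 * t i := by
    rw [frobSq_proj_mul hPt hPP W]
    have e : Wᵀ * (P * W)
        = V * ((Matrix.diagonal d * (Uᵀ * (P * U)) * Matrix.diagonal d) * Vᵀ) := by
      rw [hW]
      simp only [Matrix.transpose_mul, Matrix.transpose_transpose, Matrix.diagonal_transpose,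
        Matrix.mul_assoc]
    rw [e, Matrix.trace_mul_comm]
    rw [Matrix.mul_assoc, hV, Matrix.mul_one]
    exact trace_diag_mul_mul_diag d _
  have hWPW : frobSq (W - P * W) = ∑ i, d i ^ 2 * (1 - t i) := by
    have hp := frobSq_pythagoras hPt hPP W
    have : frobSq (W - P * W) = frobSq W - frobSq (P * W) := by linarith
    rw [this, hfrobW, hfrobPW, ← Finset.sum_sub_distrib]
    exact Finset.sum_congr rfl fun i _ => by ring
  -- the per-index slack
  set g : Fin r → ℝ := fun i => (1/2) * (d i ^ 2 * (1 - t i)) + lam * t i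
      - (if 2 * lam < d i ^ 2 then lam else (1/2) * d i ^ 2) with hg
  have hg0 : ∀ i, 0 ≤ g i := by
    intro i
    by_cases hcond : 2 * lam < d i ^ 2
    · have : g i = ((1/2) * d i ^ 2 - lam) * (1 - t i) := by simp only [hg, hcond, if_pos]; ring
      rw [this]
      apply mul_nonneg (by linarith) (by linarith [ht1 i])
    · have hlt : d i ^ 2 < 2 * lam := lt_of_le_of_ne (not_lt.mp hcond) (hgen i)
      have : g i = (lam - (1/2) * d i ^ 2) * t i := by
        simp only [hg]
        rw [if_neg hcond]
        ring
      rw [this]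
      apply mul_nonneg (by linarith) (ht0 i)
  have hgsum : ∑ i, g i
      = (1/2) * (∑ i, d i ^ 2 * (1 - t i)) + lam * (∑ i, t i)
        - ∑ i, (if 2 * lam < d i ^ 2 then lam else (1/2) * d i ^ 2) := by
    rw [Finset.mul_sum, Finset.mul_sum, ← Finset.sum_add_distrib, ← Finset.sum_sub_distrib]
  -- assemble
  set F := frobSq (Z - P * W) with hF
  have hF0 : 0 ≤ F := frobSq_nonneg' _
  have hG0 : (0:ℝ) ≤ ∑ i, g i := Finset.sum_nonneg fun i _ => hg0 i
  have hTR : lam * ((Z.rank : ℝ) - ∑ i, t i) ≥ 0 := by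
    apply mul_nonneg (le_of_lt hlam)
    rw [← hPtr]
    linarith
  -- key: everything sums to the objective difference
  have hobj : (1/2) * frobSq (Z - W) + lam * ((Z.rank : ℝ))
      = ((1/2) * frobSq (Zs - W) + lam * ((Zs.rank : ℝ)))
        + (1/2) * F + lam * ((Z.rank : ℝ) - ∑ i, t i) + ∑ i, g i := by
    rw [hE, hdecomp, hWPW]
    rw [hgsum]
    ring
  -- conclude each slack is zero
  have hslack : (1/2) * F + lam * ((Z.rank : ℝ) - ∑ i, t i) + ∑ i, g i ≤ 0 := by linarith
  have hFz : F = 0 := by linarith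
  have hGz : ∑ i, g i = 0 := by linarith
  have hgz : ∀ i, g i = 0 := fun i =>
    (Finset.sum_eq_zero_iff_of_nonneg fun i _ => hg0 i).mp hGz i (Finset.mem_univ i)
  have hti : ∀ i, t i = (if 2 * lam < d i ^ 2 then (1:ℝ) else 0) := by
    intro i
    have hgi := hgz i
    by_cases hcond : 2 * lam < d i ^ 2
    · have e : ((1/2) * d i ^ 2 - lam) * (1 - t i) = 0 := by
        rw [← hgi]; simp only [hg, hcond, if_pos]; ring
      have hne : (1/2) * d i ^ 2 - lam ≠ 0 := by
        intro h0
        exact hgen i (by linarith)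
      have : 1 - t i = 0 := by
        rcases mul_eq_zero.mp e with h | h
        · exact absurd h hne
        · exact h
      simp [hcond]
      linarith
    · have e : (lam - (1/2) * d i ^ 2) * t i = 0 := by
        rw [← hgi]; simp only [hg, hcond, if_neg, not_false_iff]; ring
      have hlt : d i ^ 2 < 2 * lam := lt_of_le_of_ne (not_lt.mp hcond) (hgen i)
      have hne : lam - (1/2) * d i ^ 2 ≠ 0 := by intro h0; linarith
      have : t i = 0 := by
        rcases mul_eq_zero.mp e with h | h
        · exact absurd h hne
        · exact h
      simp [hcond, this]
  -- Z = P * W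
  have hZPW : Z = P * W := by
    have h0 : Z - P * W = 0 := frobSq_eq_zero' hFz
    rwa [sub_eq_zero] at h0
  -- P * U = U * diagonal χ
  have hPU : P * U = U * Matrix.diagonal (fun i => if 2 * lam < d i ^ 2 then (1:ℝ) else 0) := by
    ext k i
    rw [Matrix.mul_diagonal]
    by_cases hcond : 2 * lam < d i ^ 2
    · have ht1' : t i = 1 := by rw [hti i, if_pos hcond]
      have hsq : ∑ k, ((U - P * U) k i) ^ 2 = 0 := by rw [← hone i, ht1']; ring
      have hk := (Finset.sum_eq_zero_iff_of_nonneg fun k _ => sq_nonneg _).mp hsq k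
        (Finset.mem_univ k)
      have hk2 : (U - P * U) k i = 0 := sq_eq_zero_iff.mp hk
      simp only [Matrix.sub_apply] at hk2
      rw [if_pos hcond, mul_one]
      linarith
    · have ht0' : t i = 0 := by rw [hti i, if_neg hcond]
      have hsq : ∑ k, ((P * U) k i) ^ 2 = 0 := by rw [← ht_sq i, ht0']
      have hk := (Finset.sum_eq_zero_iff_of_nonneg fun k _ => sq_nonneg _).mp hsq k
        (Finset.mem_univ k)
      have hk2 : (P * U) k i = 0 := sq_eq_zero_iff.mp hk
      rw [if_neg hcond, mul_zero]
      exact hk2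
  -- final contradiction
  apply hZ
  rw [hZPW, hW, ← Matrix.mul_assoc, ← Matrix.mul_assoc, hPU, hZs,
    Matrix.mul_assoc U _ (Matrix.diagonal d), Matrix.diagonal_mul_diagonal]
  congr 2
  funext i
  by_cases hcond : 2 * lam < d i ^ 2 <;> simp [hc, hcond]
end
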